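/- Let Π ∈ S ⊂ ℝ^{m×T} with rank(Π) ≤ K+1, S convex, and let P, M be the projections onto the orthogonal complement and low-rank space of Π respectively (as defined via the SVD of Π). Let Π̂ minimize Γ ↦ (1/2)Σ_{i,t}(y_{it} − tr(X_{it}ᵀΓ))² + λ‖Γ‖₊ over Γ ∈ S. Assume: (a) for all Δ ∈ S ⊖ S, Σ_{i,t}|tr(X_{it}ᵀΔ)|² = Q(Δ) + L(Δ) with Q(Δ) ≥ κ‖Δ‖_F² whenever ‖P(Δ)‖₊ ≤ 3‖M(Δ)‖₊, and |L(Δ)| ≤ r‖Δ‖₊; (b) |Σ_{i,t} tr(ε_{it}X_{it}ᵀΔ)| ≤ (r/2)‖Δ‖₊ for all Δ ∈ S ⊖ S, where ε_{it} = y_{it} − tr(X_{it}ᵀΠ); and (c) λ ≥ 2r. Then the error Δ̂ = Π̂ − Π satisfies ‖P(Δ̂)‖₊ ≤ 3‖M(Δ̂)‖₊ and ‖Π̂ − Π‖_F ≤ 3√(2(K+1)) λ / κ. -/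

import Mathlib

open Matrix BigOperators

noncomputable def frobNorm {m n : Type*} [Fintype m] [Fintype n] (A : Matrix m n ℝ) : ℝ :=
  Real.sqrt (∑ i, ∑ j, (A i j) ^ 2)

noncomputable def nuclearNorm {m n : Type*} [Fintype m] [Fintype n] [DecidableEq n]
    (A : Matrix m n ℝ) : ℝ :=
  ∑ j, Real.sqrt ((Matrix.isHermitian_conjTranspose_mul_self A).eigenvalues j)

noncomputable def opNorm {m n : Type*} [Fintype m] [Fintype n] [DecidableEq n]
    (A : Matrix m n ℝ) : ℝ :=
  ‖LinearMap.toContinuousLinearMap (Matrix.toEuclideanLin A)‖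
set_option linter.unusedSectionVars false
set_option maxHeartbeats 1000000

section aux
variable {m n : Type*} [Fintype m] [Fintype n] [DecidableEq m] [DecidableEq n]

lemma ct_eq {α β : Type*} [Fintype α] [Fintype β] (A : Matrix α β ℝ) : Aᴴ = Aᵀ :=
  Matrix.conjTranspose_eq_transpose_of_trivial A

lemma eigs_congr {M₁ M₂ : Matrix n n ℝ} (h : M₁ = M₂) (h1 : M₁.IsHermitian) (h2 : M₂.IsHermitian) :
    h1.eigenvalues = h2.eigenvalues := by subst h; rfl

lemma isHermitian_tmul (A : Matrix m n ℝ) : (Aᵀ * A).IsHermitian := by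
  rw [← ct_eq]; exact Matrix.isHermitian_conjTranspose_mul_self A

lemma nuclearNorm_eq (A : Matrix m n ℝ) (h : (Aᵀ * A).IsHermitian) :
    nuclearNorm A = ∑ j, Real.sqrt (h.eigenvalues j) := by
  unfold nuclearNorm
  rw [eigs_congr (show Aᴴ * A = Aᵀ * A by rw [ct_eq]) _ h]

lemma nuclearNorm_congr {A B : Matrix m n ℝ} (h : Aᵀ * A = Bᵀ * B) :
    nuclearNorm A = nuclearNorm B := by
  rw [nuclearNorm_eq A (isHermitian_tmul A), nuclearNorm_eq B (isHermitian_tmul B),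
    eigs_congr h (isHermitian_tmul A) (isHermitian_tmul B)]

lemma nuclearNorm_nonneg (A : Matrix m n ℝ) : 0 ≤ nuclearNorm A :=
  Finset.sum_nonneg fun _ _ => Real.sqrt_nonneg _

lemma nuclearNorm_neg (A : Matrix m n ℝ) : nuclearNorm (-A) = nuclearNorm A :=
  nuclearNorm_congr (by simp)

lemma psd_tmul (A : Matrix m n ℝ) : (Aᵀ * A).PosSemidef := by
  have := Matrix.posSemidef_conjTranspose_mul_self A
  rwa [ct_eq] at this

lemma eigs_nonneg (A : Matrix m n ℝ) (j : n) :
    0 ≤ (isHermitian_tmul A).eigenvalues j :=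
  (psd_tmul A).eigenvalues_nonneg j

lemma spectral_data (A : Matrix m n ℝ) :
    ∃ U : Matrix n n ℝ, U * Uᵀ = 1 ∧ Uᵀ * U = 1 ∧
      Uᵀ * (Aᵀ * A) * U = Matrix.diagonal ((isHermitian_tmul A).eigenvalues) := by
  set hA := isHermitian_tmul A
  refine ⟨(hA.eigenvectorUnitary : Matrix n n ℝ), ?_, ?_, ?_⟩
  · have := Matrix.mem_unitaryGroup_iff.mp hA.eigenvectorUnitary.2
    rwa [Matrix.star_eq_conjTranspose, ct_eq] at this
  · have := Matrix.mem_unitaryGroup_iff'.mp hA.eigenvectorUnitary.2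
    rwa [Matrix.star_eq_conjTranspose, ct_eq] at this
  · have := Matrix.IsHermitian.conjStarAlgAut_star_eigenvectorUnitary hA
    rw [Unitary.conjStarAlgAut_apply, Unitary.coe_star, star_star, Matrix.star_eq_conjTranspose, ct_eq] at this
    simpa using this

lemma psd_diag_nonneg {M : Matrix n n ℝ} (h : M.PosSemidef) (j : n) : 0 ≤ M j j := by
  exact h.diag_nonneg

lemma cs_sum (f g : m → ℝ) :
    ∑ i, f i * g i ≤ Real.sqrt (∑ i, f i ^ 2) * Real.sqrt (∑ i, g i ^ 2) := by
  calc ∑ i, f i * g i ≤ |∑ i, f i * g i| := le_abs_self _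
    _ = Real.sqrt ((∑ i, f i * g i) ^ 2) := (Real.sqrt_sq_eq_abs _).symm
    _ ≤ Real.sqrt ((∑ i, f i ^ 2) * ∑ i, g i ^ 2) :=
        Real.sqrt_le_sqrt (Finset.sum_mul_sq_le_sq_mul_sq _ _ _)
    _ = _ := Real.sqrt_mul (by positivity) _

lemma col_sq_entry (B : Matrix m n ℝ) (j : n) : (Bᵀ * B) j j = ∑ i, B i j ^ 2 := by
  simp [Matrix.mul_apply, sq]

/-- Dual bound: if `1 - WᵀW` is PSD then `tr(WᵀA) ≤ ‖A‖₊`. -/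
lemma trace_le_nuclearNorm (A W : Matrix m n ℝ) (hW : (1 - Wᵀ * W).PosSemidef) :
    Matrix.trace (Wᵀ * A) ≤ nuclearNorm A := by
  obtain ⟨U, hUU, hUU', hdiag⟩ := spectral_data A
  set lam := (isHermitian_tmul A).eigenvalues with hlam
  have htr : Matrix.trace (Wᵀ * A) = ∑ j, ∑ i, (W * U) i j * (A * U) i j := by
    have h1 : Wᵀ * A = (Wᵀ * A * U) * Uᵀ := by
      rw [Matrix.mul_assoc, hUU, Matrix.mul_one]
    rw [h1, Matrix.trace_mul_comm]
    have h2 : Uᵀ * (Wᵀ * A * U) = (W * U)ᵀ * (A * U) := by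
      simp [Matrix.transpose_mul, Matrix.mul_assoc]
    rw [h2, Matrix.trace]
    apply Finset.sum_congr rfl
    intro j _
    simp only [Matrix.diag, Matrix.mul_apply, Matrix.transpose_apply]
  have hA_col : ∀ j, ∑ i, (A * U) i j ^ 2 = lam j := by
    intro j
    have h3 : (A * U)ᵀ * (A * U) = Uᵀ * (Aᵀ * A) * U := by
      simp [Matrix.transpose_mul, Matrix.mul_assoc]
    have := col_sq_entry (A * U) j
    rw [h3, hdiag] at this
    simpa [Matrix.diagonal_apply_eq] using this.symm
  have hW_col : ∀ j, ∑ i, (W * U) i j ^ 2 ≤ 1 := by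
    intro j
    have hpsd2 : ((Uᴴ) * (1 - Wᵀ * W) * U).PosSemidef := hW.conjTranspose_mul_mul_same U
    rw [ct_eq] at hpsd2
    have h4 : Uᵀ * (1 - Wᵀ * W) * U = 1 - (W * U)ᵀ * (W * U) := by
      have : (W * U)ᵀ * (W * U) = Uᵀ * (Wᵀ * W) * U := by
        simp [Matrix.transpose_mul, Matrix.mul_assoc]
      rw [this, Matrix.mul_sub, Matrix.sub_mul, Matrix.mul_one, hUU']
    rw [h4] at hpsd2
    have h5 := psd_diag_nonneg hpsd2 j
    have h6 := col_sq_entry (W * U) j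
    simp only [Matrix.sub_apply, Matrix.one_apply_eq] at h5
    linarith [h6 ▸ h5]
  rw [htr, nuclearNorm_eq A (isHermitian_tmul A)]
  apply Finset.sum_le_sum
  intro j _
  calc ∑ i, (W * U) i j * (A * U) i j
      ≤ Real.sqrt (∑ i, (W * U) i j ^ 2) * Real.sqrt (∑ i, (A * U) i j ^ 2) := cs_sum _ _
    _ ≤ 1 * Real.sqrt (lam j) := by
        apply mul_le_mul _ (by rw [hA_col]) (Real.sqrt_nonneg _) zero_le_one
        simpa using Real.sqrt_le_sqrt (hW_col j)
    _ = Real.sqrt (lam j) := one_mul _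

/-- conjugation by U of diagonal matrices multiplies -/
lemma conj_diag_mul {U : Matrix n n ℝ} (hUU' : Uᵀ * U = 1) (a b : n → ℝ) :
    (U * Matrix.diagonal a * Uᵀ) * (U * Matrix.diagonal b * Uᵀ) =
      U * Matrix.diagonal (fun j => a j * b j) * Uᵀ := by
  have : Matrix.diagonal a * (Uᵀ * (U * (Matrix.diagonal b * Uᵀ))) =
      Matrix.diagonal (fun j => a j * b j) * Uᵀ := by
    rw [← Matrix.mul_assoc Uᵀ U, hUU', Matrix.one_mul, ← Matrix.mul_assoc,
      Matrix.diagonal_mul_diagonal]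
  simp only [Matrix.mul_assoc, this]

/-- Existence of an optimal dual witness with structural properties. -/
lemma exists_dual_witness (A : Matrix m n ℝ) :
    ∃ W : Matrix m n ℝ, Matrix.trace (Wᵀ * A) = nuclearNorm A ∧
      (∃ C : Matrix n n ℝ, W = A * C) ∧ (∃ E : Matrix m n ℝ, Wᵀ * W = Aᵀ * E) ∧
      (Wᵀ * W)ᵀ = Wᵀ * W ∧ (Wᵀ * W) * (Wᵀ * W) = Wᵀ * W := by
  obtain ⟨U, hUU, hUU', hdiag⟩ := spectral_data A
  set lam := (isHermitian_tmul A).eigenvalues with hlam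
  have hlam0 : ∀ j, 0 ≤ lam j := eigs_nonneg A
  have hspec : Aᵀ * A = U * Matrix.diagonal lam * Uᵀ := by
    have h0 : U * (Uᵀ * (Aᵀ * A) * U) * Uᵀ = U * Matrix.diagonal lam * Uᵀ :=
      congrArg (fun M => U * M * Uᵀ) hdiag
    have h1 : U * (Uᵀ * (Aᵀ * A) * U) * Uᵀ = (U * Uᵀ) * (Aᵀ * A) * (U * Uᵀ) := by
      simp only [Matrix.mul_assoc]
    rw [h1, hUU, Matrix.one_mul, Matrix.mul_one] at h0
    exact h0
  set g : n → ℝ := fun j => if lam j = 0 then 0 else (Real.sqrt (lam j))⁻¹ with hg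
  set e : n → ℝ := fun j => if lam j = 0 then 0 else 1 with he
  set C : Matrix n n ℝ := U * Matrix.diagonal g * Uᵀ with hC
  set W : Matrix m n ℝ := A * C with hWdef
  have hCt : Cᵀ = C := by
    rw [hC, Matrix.transpose_mul, Matrix.transpose_mul, Matrix.transpose_transpose,
      Matrix.diagonal_transpose, Matrix.mul_assoc]
  have hsq : ∀ j, Real.sqrt (lam j) * Real.sqrt (lam j) = lam j := fun j =>
    Real.mul_self_sqrt (hlam0 j)
  have hsne : ∀ j, lam j ≠ 0 → Real.sqrt (lam j) ≠ 0 := by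
    intro j h
    exact ne_of_gt (Real.sqrt_pos.2 ((hlam0 j).lt_of_ne (Ne.symm h)))
  have hgl : ∀ j, g j * lam j = Real.sqrt (lam j) := by
    intro j
    by_cases h : lam j = 0
    · simp [hg, h]
    · have hs := hsne j h
      simp only [hg, if_neg h]
      field_simp
      exact (Real.sq_sqrt (hlam0 j)).symm
  have hWtW : Wᵀ * W = U * Matrix.diagonal e * Uᵀ := by
    rw [hWdef, Matrix.transpose_mul, hCt, Matrix.mul_assoc, ← Matrix.mul_assoc Aᵀ A C, hspec,
      hC, conj_diag_mul hUU', conj_diag_mul hUU']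
    rw [show (fun j => g j * (lam j * g j)) = e from funext fun j => by
      by_cases h : lam j = 0
      · simp [hg, he, h]
      · have hs := hsne j h
        simp only [hg, he, if_neg h]
        field_simp
        exact (Real.sq_sqrt (hlam0 j)).symm]
  refine ⟨W, ?_, ⟨C, rfl⟩, ?_, ?_, ?_⟩
  · -- trace
    have h1 : Wᵀ * A = C * (Aᵀ * A) := by
      rw [hWdef, Matrix.transpose_mul, hCt, Matrix.mul_assoc]
    rw [h1, hspec, hC, conj_diag_mul hUU', Matrix.trace_mul_comm, ← Matrix.mul_assoc, hUU',
      Matrix.one_mul, Matrix.trace_diagonal, nuclearNorm_eq A (isHermitian_tmul A)]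
    exact Finset.sum_congr rfl fun j _ => hgl j
  · -- Wᵀ W = Aᵀ E
    refine ⟨A * (U * Matrix.diagonal (fun j => if lam j = 0 then 0 else (lam j)⁻¹) * Uᵀ), ?_⟩
    have h2 : Aᵀ * (A * (U * Matrix.diagonal (fun j => if lam j = 0 then 0 else (lam j)⁻¹) * Uᵀ))
        = (Aᵀ * A) * (U * Matrix.diagonal (fun j => if lam j = 0 then 0 else (lam j)⁻¹) * Uᵀ) :=
      (Matrix.mul_assoc _ _ _).symm
    rw [hWtW, h2, hspec, conj_diag_mul hUU']
    rw [show (fun j => lam j * (if lam j = 0 then 0 else (lam j)⁻¹)) = e from funext fun j => by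
      by_cases h : lam j = 0
      · simp [he, h]
      · simp only [he, if_neg h]
        exact mul_inv_cancel₀ h]
  · rw [hWtW, Matrix.transpose_mul, Matrix.transpose_mul, Matrix.transpose_transpose,
      Matrix.diagonal_transpose, Matrix.mul_assoc]
  · rw [hWtW, conj_diag_mul hUU']
    rw [show (fun j => e j * e j) = e from funext fun j => by
      by_cases h : lam j = 0 <;> simp [he, h]]

lemma psd_of_symm_idem {R : Matrix n n ℝ} (h1 : Rᵀ = R) (h2 : R * R = R) : R.PosSemidef := by
  have h3 : R = Rᴴ * R := by rw [ct_eq, h1, h2]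
  rw [h3]
  exact Matrix.posSemidef_conjTranspose_mul_self R

lemma psd_one_sub_of_symm_idem {R : Matrix n n ℝ} (h1 : Rᵀ = R) (h2 : R * R = R) :
    (1 - R).PosSemidef := by
  apply psd_of_symm_idem
  · rw [Matrix.transpose_sub, Matrix.transpose_one, h1]
  · rw [Matrix.mul_sub, Matrix.sub_mul, Matrix.sub_mul, Matrix.mul_one, Matrix.one_mul,
      Matrix.mul_one, h2]
    abel

lemma nuclearNorm_add_le (A B : Matrix m n ℝ) :
    nuclearNorm (A + B) ≤ nuclearNorm A + nuclearNorm B := by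
  obtain ⟨W, htr, _, _, hsym, hidem⟩ := exists_dual_witness (A + B)
  have hpsd : (1 - Wᵀ * W).PosSemidef := psd_one_sub_of_symm_idem hsym hidem
  have h1 : Matrix.trace (Wᵀ * (A + B)) = Matrix.trace (Wᵀ * A) + Matrix.trace (Wᵀ * B) := by
    rw [Matrix.mul_add, Matrix.trace_add]
  rw [← htr, h1]
  exact add_le_add (trace_le_nuclearNorm A W hpsd) (trace_le_nuclearNorm B W hpsd)

lemma nuclearNorm_sub_le (A B : Matrix m n ℝ) :
    nuclearNorm A ≤ nuclearNorm B + nuclearNorm (A - B) := by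
  have := nuclearNorm_add_le B (A - B)
  rwa [add_sub_cancel] at this

/-- Decomposability: for matrices with orthogonal row and column spaces the nuclear norm adds
(the `≥` direction). -/
lemma nuclearNorm_decomp (A B : Matrix m n ℝ) (hAB : Aᵀ * B = 0) (hAB' : A * Bᵀ = 0) :
    nuclearNorm A + nuclearNorm B ≤ nuclearNorm (A + B) := by
  obtain ⟨WA, htrA, ⟨CA, hCA⟩, ⟨EA, hEA⟩, hsymA, hidemA⟩ := exists_dual_witness A
  obtain ⟨WB, htrB, ⟨CB, hCB⟩, ⟨EB, hEB⟩, hsymB, hidemB⟩ := exists_dual_witness B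
  have hBA : Bᵀ * A = 0 := by
    have := congrArg Matrix.transpose hAB
    rwa [Matrix.transpose_mul, Matrix.transpose_transpose, Matrix.transpose_zero] at this
  set W := WA + WB with hW
  have hcross1 : WAᵀ * WB = 0 := by
    rw [hCA, hCB, Matrix.transpose_mul]
    calc CAᵀ * Aᵀ * (B * CB) = CAᵀ * (Aᵀ * B) * CB := by simp only [Matrix.mul_assoc]
      _ = 0 := by rw [hAB, Matrix.mul_zero, Matrix.zero_mul]
  have hcross2 : WBᵀ * WA = 0 := by
    rw [hCB, hCA, Matrix.transpose_mul]
    calc CBᵀ * Bᵀ * (A * CA) = CBᵀ * (Bᵀ * A) * CA := by simp only [Matrix.mul_assoc]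
      _ = 0 := by rw [hBA, Matrix.mul_zero, Matrix.zero_mul]
  have hQ : Wᵀ * W = WAᵀ * WA + WBᵀ * WB := by
    rw [hW, Matrix.transpose_add, Matrix.add_mul, Matrix.mul_add, Matrix.mul_add, hcross1,
      hcross2]
    abel
  have hPP : (WAᵀ * WA) * (WBᵀ * WB) = 0 := by
    have hQA : WAᵀ * WA = EAᵀ * A := by
      conv_lhs => rw [← hsymA, hEA]
      rw [Matrix.transpose_mul, Matrix.transpose_transpose]
    rw [hQA, hEB]
    calc EAᵀ * A * (Bᵀ * EB) = EAᵀ * (A * Bᵀ) * EB := by simp only [Matrix.mul_assoc]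
      _ = 0 := by rw [hAB', Matrix.mul_zero, Matrix.zero_mul]
  have hPP' : (WBᵀ * WB) * (WAᵀ * WA) = 0 := by
    have := congrArg Matrix.transpose hPP
    rwa [Matrix.transpose_mul, hsymA, hsymB, Matrix.transpose_zero] at this
  have hsym : (Wᵀ * W)ᵀ = Wᵀ * W := by
    rw [hQ, Matrix.transpose_add, hsymA, hsymB]
  have hidem : (Wᵀ * W) * (Wᵀ * W) = Wᵀ * W := by
    rw [hQ, Matrix.mul_add, Matrix.add_mul, Matrix.add_mul, hidemA, hidemB, hPP, hPP']
    abel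
  have hpsd : (1 - Wᵀ * W).PosSemidef := psd_one_sub_of_symm_idem hsym hidem
  have e1 : WAᵀ * B = 0 := by
    rw [hCA, Matrix.transpose_mul, Matrix.mul_assoc, hAB, Matrix.mul_zero]
  have e2 : WBᵀ * A = 0 := by
    rw [hCB, Matrix.transpose_mul, Matrix.mul_assoc, hBA, Matrix.mul_zero]
  have hsplit : Wᵀ * (A + B) = WAᵀ * A + WBᵀ * B := by
    rw [hW, Matrix.transpose_add, Matrix.add_mul, Matrix.mul_add, Matrix.mul_add, e1, e2,
      add_zero, zero_add]
  calc nuclearNorm A + nuclearNorm B = Matrix.trace (Wᵀ * (A + B)) := by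
        rw [hsplit, Matrix.trace_add, htrA, htrB]
    _ ≤ nuclearNorm (A + B) := trace_le_nuclearNorm _ _ hpsd
lemma frobNorm_nonneg (A : Matrix m n ℝ) : 0 ≤ frobNorm A := Real.sqrt_nonneg _

lemma frobNorm_sq (A : Matrix m n ℝ) : frobNorm A ^ 2 = Matrix.trace (Aᵀ * A) := by
  rw [frobNorm, Real.sq_sqrt (by positivity)]
  rw [Matrix.trace]
  simp only [Matrix.diag, Matrix.mul_apply, Matrix.transpose_apply, sq]
  rw [Finset.sum_comm]

lemma frobNorm_sq_add (A B : Matrix m n ℝ) :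
    frobNorm (A + B) ^ 2 = frobNorm A ^ 2 + frobNorm B ^ 2 + 2 * Matrix.trace (Aᵀ * B) := by
  rw [frobNorm_sq, frobNorm_sq, frobNorm_sq, Matrix.transpose_add, Matrix.add_mul,
    Matrix.mul_add, Matrix.mul_add, Matrix.trace_add, Matrix.trace_add, Matrix.trace_add]
  have : Matrix.trace (Bᵀ * A) = Matrix.trace (Aᵀ * B) := by
    rw [← Matrix.trace_transpose (Bᵀ * A), Matrix.transpose_mul, Matrix.transpose_transpose]
  rw [this]; ring

lemma sum_eigs_eq (A : Matrix m n ℝ) :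
    ∑ j, (isHermitian_tmul A).eigenvalues j = Matrix.trace (Aᵀ * A) := by
  obtain ⟨U, hUU, hUU', hdiag⟩ := spectral_data A
  have h1 : Matrix.trace (Uᵀ * (Aᵀ * A) * U) = Matrix.trace (Aᵀ * A) := by
    rw [Matrix.trace_mul_comm, ← Matrix.mul_assoc, ← Matrix.mul_assoc, hUU, Matrix.one_mul]
  rw [← h1, hdiag, Matrix.trace_diagonal]

lemma card_nonzero_eigs (A : Matrix m n ℝ) :
    (Finset.univ.filter fun j => (isHermitian_tmul A).eigenvalues j ≠ 0).card = A.rank := by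
  classical
  have h1 : (Aᵀ * A).rank = A.rank := by
    have := Matrix.rank_transpose_mul_self A
    exact this
  rw [← h1, (isHermitian_tmul A).rank_eq_card_non_zero_eigs, Fintype.card_subtype]

lemma nuclearNorm_le_sqrt_rank_mul_frobNorm (A : Matrix m n ℝ) :
    nuclearNorm A ≤ Real.sqrt (A.rank) * frobNorm A := by
  classical
  set lam := (isHermitian_tmul A).eigenvalues with hlam
  have hlam0 : ∀ j, 0 ≤ lam j := eigs_nonneg A
  set s := Finset.univ.filter fun j => lam j ≠ 0 with hs
  have h1 : nuclearNorm A = ∑ j ∈ s, Real.sqrt (lam j) := by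
    rw [nuclearNorm_eq A (isHermitian_tmul A)]
    refine (Finset.sum_subset (Finset.subset_univ s) fun j _ hj => ?_).symm
    have hj0 : lam j = 0 := by simpa [hs] using hj
    rw [← hlam, hj0, Real.sqrt_zero]
  have h2 : (∑ j ∈ s, Real.sqrt (lam j)) ^ 2 ≤ (s.card : ℝ) * ∑ j ∈ s, lam j := by
    calc (∑ j ∈ s, Real.sqrt (lam j)) ^ 2 ≤ (s.card : ℝ) * ∑ j ∈ s, Real.sqrt (lam j) ^ 2 := by
          exact_mod_cast sq_sum_le_card_mul_sum_sq (s := s) (f := fun j => Real.sqrt (lam j))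
      _ = (s.card : ℝ) * ∑ j ∈ s, lam j := by
          rw [Finset.sum_congr rfl fun j _ => Real.sq_sqrt (hlam0 j)]
  have h3 : ∑ j ∈ s, lam j ≤ frobNorm A ^ 2 := by
    rw [frobNorm_sq, ← sum_eigs_eq]
    exact Finset.sum_le_sum_of_subset_of_nonneg (Finset.subset_univ s) fun j _ _ => hlam0 j
  have hcard : (s.card : ℝ) = (A.rank : ℝ) := by
    have h := card_nonzero_eigs A
    exact_mod_cast h
  have h4 : nuclearNorm A ^ 2 ≤ (A.rank : ℝ) * frobNorm A ^ 2 := by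
    rw [h1, ← hcard]
    calc (∑ j ∈ s, Real.sqrt (lam j)) ^ 2 ≤ (s.card : ℝ) * ∑ j ∈ s, lam j := h2
      _ ≤ (s.card : ℝ) * frobNorm A ^ 2 := by
          exact mul_le_mul_of_nonneg_left h3 (by positivity)
  calc nuclearNorm A = Real.sqrt (nuclearNorm A ^ 2) := (Real.sqrt_sq (nuclearNorm_nonneg A)).symm
    _ ≤ Real.sqrt ((A.rank : ℝ) * frobNorm A ^ 2) := Real.sqrt_le_sqrt h4
    _ = Real.sqrt (A.rank) * frobNorm A := by
        rw [Real.sqrt_mul (by positivity), Real.sqrt_sq (frobNorm_nonneg A)]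
lemma matrix_rank_add_le (A B : Matrix m n ℝ) : (A + B).rank ≤ A.rank + B.rank := by
  classical
  rw [Matrix.rank, Matrix.rank, Matrix.rank]
  have hle : LinearMap.range (A + B).mulVecLin ≤
      LinearMap.range A.mulVecLin ⊔ LinearMap.range B.mulVecLin := by
    rintro x ⟨y, rfl⟩
    refine Submodule.mem_sup.2 ⟨A.mulVecLin y, ⟨y, rfl⟩, B.mulVecLin y, ⟨y, rfl⟩, ?_⟩
    simp [Matrix.mulVecLin_apply, Matrix.add_mulVec]
  calc Module.finrank ℝ (LinearMap.range (A + B).mulVecLin)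
      ≤ Module.finrank ℝ ((LinearMap.range A.mulVecLin) ⊔ (LinearMap.range B.mulVecLin) :
          Submodule ℝ (m → ℝ)) := Submodule.finrank_mono hle
    _ ≤ _ := Submodule.finrank_add_le_finrank_add_finrank _ _
end aux

/-- Deterministic error bound for the constrained nuclear-norm regularized estimator
(Theorem 1(i)): under restricted strong convexity (a), the noise bound (b) and λ ≥ 2r (c),
the error Δ̂ = Π̂ − Π lies in the cone ‖P(Δ̂)‖₊ ≤ 3‖M(Δ̂)‖₊ and
‖Π̂ − Π‖_F ≤ 3√(2(K+1)) λ / κ. -/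
theorem nuclear_norm_regularized_error_bound
    {m n k m₂ n₂ ι : Type*} [Fintype m] [Fintype n] [Fintype k] [Fintype m₂] [Fintype n₂]
    [Fintype ι] [DecidableEq m] [DecidableEq n] [DecidableEq k] [DecidableEq m₂] [DecidableEq n₂]
    (S : Set (Matrix m n ℝ)) (hconv : Convex ℝ S)
    (Pi0 : Matrix m n ℝ) (hPiS : Pi0 ∈ S)
    -- SVD of Π defining the projections P and M
    (U₁ : Matrix m k ℝ) (U₂ : Matrix m m₂ ℝ) (V₁ : Matrix n k ℝ) (V₂ : Matrix n n₂ ℝ)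
    (Sig : Matrix k k ℝ)
    (hU1 : U₁ᵀ * U₁ = 1) (hU2 : U₂ᵀ * U₂ = 1) (hU12 : U₁ᵀ * U₂ = 0)
    (hUc : U₁ * U₁ᵀ + U₂ * U₂ᵀ = 1)
    (hV1 : V₁ᵀ * V₁ = 1) (hV2 : V₂ᵀ * V₂ = 1) (hV12 : V₁ᵀ * V₂ = 0)
    (hVc : V₁ * V₁ᵀ + V₂ * V₂ᵀ = 1)
    (hdiag : ∀ i j, i ≠ j → Sig i j = 0) (hnz : ∀ i, Sig i i ≠ 0)
    (hSVD : Pi0 = U₁ * Sig * V₁ᵀ)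
    (P M : Matrix m n ℝ → Matrix m n ℝ)
    (hP : ∀ Δ, P Δ = U₂ * U₂ᵀ * Δ * (V₂ * V₂ᵀ))
    (hMdef : ∀ Δ, M Δ = Δ - P Δ)
    (K : ℕ) (hK : Pi0.rank ≤ K + 1)
    -- data, constants and hypotheses (a), (b), (c)
    (y : ι → ℝ) (X : ι → Matrix m n ℝ)
    (κ r lam : ℝ) (hκ : 0 < κ) (hr : 0 < r) (hlam : 2 * r ≤ lam)
    (Q L : Matrix m n ℝ → ℝ)
    (hQL : ∀ Δ, (∃ Γ₁ ∈ S, ∃ Γ₂ ∈ S, Δ = Γ₁ - Γ₂) →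
      ∑ i, (Matrix.trace ((X i)ᵀ * Δ)) ^ 2 = Q Δ + L Δ)
    (hQ : ∀ Δ, (∃ Γ₁ ∈ S, ∃ Γ₂ ∈ S, Δ = Γ₁ - Γ₂) →
      nuclearNorm (P Δ) ≤ 3 * nuclearNorm (M Δ) → κ * frobNorm Δ ^ 2 ≤ Q Δ)
    (hL : ∀ Δ, (∃ Γ₁ ∈ S, ∃ Γ₂ ∈ S, Δ = Γ₁ - Γ₂) → |L Δ| ≤ r * nuclearNorm Δ)
    (hnoise : ∀ Δ, (∃ Γ₁ ∈ S, ∃ Γ₂ ∈ S, Δ = Γ₁ - Γ₂) →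
      |∑ i, (y i - Matrix.trace ((X i)ᵀ * Pi0)) * Matrix.trace ((X i)ᵀ * Δ)| ≤
        r / 2 * nuclearNorm Δ)
    -- the estimator
    (PiHat : Matrix m n ℝ) (hPiHatS : PiHat ∈ S)
    (hmin : ∀ Γ ∈ S,
      (1 / 2) * ∑ i, (y i - Matrix.trace ((X i)ᵀ * PiHat)) ^ 2 + lam * nuclearNorm PiHat ≤
        (1 / 2) * ∑ i, (y i - Matrix.trace ((X i)ᵀ * Γ)) ^ 2 + lam * nuclearNorm Γ) :
    nuclearNorm (P (PiHat - Pi0)) ≤ 3 * nuclearNorm (M (PiHat - Pi0)) ∧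
      frobNorm (PiHat - Pi0) ≤ 3 * Real.sqrt (2 * (K + 1)) * lam / κ := by
    classical
  set Δ : Matrix m n ℝ := PiHat - Pi0 with hΔ
  have hmem : ∃ Γ₁ ∈ S, ∃ Γ₂ ∈ S, Δ = Γ₁ - Γ₂ := ⟨PiHat, hPiHatS, Pi0, hPiS, rfl⟩
  have hlampos : 0 < lam := lt_of_lt_of_le (by linarith) hlam
  have hPiHat : PiHat = Pi0 + Δ := by rw [hΔ]; abel
  -- abbreviations
  set T2 : ℝ := ∑ i, (Matrix.trace ((X i)ᵀ * Δ)) ^ 2 with hT2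
  set ET : ℝ := ∑ i, (y i - Matrix.trace ((X i)ᵀ * Pi0)) * Matrix.trace ((X i)ᵀ * Δ) with hET
  set a : ℝ := nuclearNorm (P Δ) with ha
  set b : ℝ := nuclearNorm (M Δ) with hb
  set d : ℝ := nuclearNorm Δ with hd
  set F : ℝ := frobNorm Δ with hF
  have ha0 : 0 ≤ a := nuclearNorm_nonneg _
  have hb0 : 0 ≤ b := nuclearNorm_nonneg _
  have hd0 : 0 ≤ d := nuclearNorm_nonneg _
  have hF0 : 0 ≤ F := frobNorm_nonneg _
  -- basic inequality from minimality
  have hexp : ∑ i, (y i - Matrix.trace ((X i)ᵀ * PiHat)) ^ 2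
      = ∑ i, (y i - Matrix.trace ((X i)ᵀ * Pi0)) ^ 2 - 2 * ET + T2 := by
    rw [hET, hT2, Finset.mul_sum, ← Finset.sum_sub_distrib, ← Finset.sum_add_distrib]
    refine Finset.sum_congr rfl fun i _ => ?_
    have ht : Matrix.trace ((X i)ᵀ * PiHat)
        = Matrix.trace ((X i)ᵀ * Pi0) + Matrix.trace ((X i)ᵀ * Δ) := by
      conv_lhs => rw [hPiHat]
      rw [Matrix.mul_add, Matrix.trace_add]
    rw [ht]; ring
  have hbasic : (1/2) * T2 ≤ ET + lam * (nuclearNorm Pi0 - nuclearNorm PiHat) := by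
    have h := hmin Pi0 hPiS
    rw [hexp] at h
    linarith
  -- noise bound
  have hET_le : ET ≤ r / 2 * d := le_trans (le_abs_self _) (hnoise Δ hmem)
  -- orthogonality of Pi0 and P Δ
  have hPt : (P Δ)ᵀ = V₂ * (V₂ᵀ * (Δᵀ * (U₂ * U₂ᵀ))) := by
    rw [hP Δ]
    simp [Matrix.transpose_mul, Matrix.mul_assoc]
  have hU21 : U₂ᵀ * U₁ = 0 := by
    have := congrArg Matrix.transpose hU12
    rwa [Matrix.transpose_mul, Matrix.transpose_transpose, Matrix.transpose_zero] at this
  have hV21 : V₂ᵀ * V₁ = 0 := by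
    have := congrArg Matrix.transpose hV12
    rwa [Matrix.transpose_mul, Matrix.transpose_transpose, Matrix.transpose_zero] at this
  have horth1 : Pi0ᵀ * P Δ = 0 := by
    rw [hSVD, hP Δ]
    simp only [Matrix.transpose_mul, Matrix.transpose_transpose, Matrix.mul_assoc]
    rw [show U₁ᵀ * (U₂ * (U₂ᵀ * (Δ * (V₂ * V₂ᵀ)))) = 0 from by
      rw [← Matrix.mul_assoc, hU12, Matrix.zero_mul], Matrix.mul_zero, Matrix.mul_zero]
  have horth2 : Pi0 * (P Δ)ᵀ = 0 := by
    rw [hSVD, hPt]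
    simp only [Matrix.mul_assoc]
    rw [show V₁ᵀ * (V₂ * (V₂ᵀ * (Δᵀ * (U₂ * U₂ᵀ)))) = 0 from by
      rw [← Matrix.mul_assoc, hV12, Matrix.zero_mul], Matrix.mul_zero, Matrix.mul_zero]
  -- decomposability chain
  have hdec : nuclearNorm Pi0 + a ≤ nuclearNorm (Pi0 + P Δ) :=
    nuclearNorm_decomp Pi0 (P Δ) horth1 horth2
  have htri : nuclearNorm (Pi0 + P Δ) ≤ nuclearNorm PiHat + b := by
    have h := nuclearNorm_sub_le (Pi0 + P Δ) PiHat
    have h2 : Pi0 + P Δ - PiHat = -(M Δ) := by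
      rw [hMdef Δ, hΔ]; abel
    rwa [h2, nuclearNorm_neg] at h
  have hdiff : nuclearNorm Pi0 - nuclearNorm PiHat ≤ b - a := by linarith
  have hd_le : d ≤ a + b := by
    have hsplit : Δ = P Δ + M Δ := by rw [hMdef Δ]; abel
    calc d = nuclearNorm (P Δ + M Δ) := by rw [hd, ← hsplit]
      _ ≤ a + b := nuclearNorm_add_le _ _
  -- products used by linarith
  have p3 : lam * (nuclearNorm Pi0 - nuclearNorm PiHat) ≤ lam * (b - a) :=
    mul_le_mul_of_nonneg_left hdiff hlampos.le
  have p4 : r * a ≤ lam / 2 * a := mul_le_mul_of_nonneg_right (by linarith) ha0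
  have p5 : r * b ≤ lam / 2 * b := mul_le_mul_of_nonneg_right (by linarith) hb0
  have p6 : r * d ≤ r * a + r * b := by
    calc r * d ≤ r * (a + b) := mul_le_mul_of_nonneg_left hd_le hr.le
      _ = r * a + r * b := by ring
  have p7 : 0 ≤ lam * a := mul_nonneg hlampos.le ha0
  have p8 : 0 ≤ lam * b := mul_nonneg hlampos.le hb0
  have hT20 : 0 ≤ T2 := by rw [hT2]; positivity
  -- cone condition
  have hcone : a ≤ 3 * b := by
    have h5 : lam * a ≤ lam * (3 * b) := by nlinarith
    exact le_of_mul_le_mul_left h5 hlampos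
  refine ⟨hcone, ?_⟩
  -- rank bound for M Δ
  have hcardk : Fintype.card k ≤ K + 1 := by
    have hSig_diag : Sig = Matrix.diagonal (fun i => Sig i i) := by
      ext i j
      by_cases h : i = j
      · subst h; simp
      · simp [Matrix.diagonal_apply_ne _ h, hdiag i j h]
    have hSigrank : Sig.rank = Fintype.card k := by
      rw [hSig_diag, Matrix.rank_diagonal, Fintype.card_subtype,
        Finset.filter_true_of_mem (fun i _ => hnz i), Finset.card_univ]
    have hSig_eq : U₁ᵀ * Pi0 * V₁ = Sig := by
      rw [hSVD]
      calc U₁ᵀ * (U₁ * Sig * V₁ᵀ) * V₁ = U₁ᵀ * U₁ * Sig * (V₁ᵀ * V₁) := by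
            simp only [Matrix.mul_assoc]
        _ = Sig := by rw [hU1, hV1, Matrix.one_mul, Matrix.mul_one]
    have h6 : Sig.rank ≤ Pi0.rank := by
      rw [← hSig_eq]
      exact le_trans (Matrix.rank_mul_le_left _ _) (Matrix.rank_mul_le_right _ _)
    omega
  have hMdecomp : M Δ = U₁ * (U₁ᵀ * Δ) + (U₂ * U₂ᵀ * Δ * V₁) * V₁ᵀ := by
    rw [hMdef Δ, hP Δ]
    have h2 : U₂ * U₂ᵀ = 1 - U₁ * U₁ᵀ := eq_sub_of_add_eq' hUc
    have h3 : V₂ * V₂ᵀ = 1 - V₁ * V₁ᵀ := eq_sub_of_add_eq' hVc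
    rw [h2, h3]
    simp only [Matrix.sub_mul, Matrix.mul_sub, Matrix.one_mul, Matrix.mul_one, Matrix.mul_assoc]
    abel
  have hrankM : (M Δ).rank ≤ 2 * (K + 1) := by
    rw [hMdecomp]
    calc (U₁ * (U₁ᵀ * Δ) + (U₂ * U₂ᵀ * Δ * V₁) * V₁ᵀ).rank
        ≤ (U₁ * (U₁ᵀ * Δ)).rank + ((U₂ * U₂ᵀ * Δ * V₁) * V₁ᵀ).rank := matrix_rank_add_le _ _
      _ ≤ Fintype.card k + Fintype.card k := by
          refine add_le_add ?_ ?_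
          · exact le_trans (Matrix.rank_mul_le_left _ _) (Matrix.rank_le_card_width _)
          · exact le_trans (Matrix.rank_mul_le_right _ _) (Matrix.rank_le_card_height _)
      _ ≤ 2 * (K + 1) := by omega
  -- Frobenius comparison
  have hcross : Matrix.trace ((P Δ)ᵀ * M Δ) = 0 := by
    rw [hMdecomp, Matrix.mul_add, Matrix.trace_add]
    have hterm1 : (P Δ)ᵀ * (U₁ * (U₁ᵀ * Δ)) = 0 := by
      rw [hPt]
      simp only [Matrix.mul_assoc]
      rw [show U₂ᵀ * (U₁ * (U₁ᵀ * Δ)) = 0 from by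
        rw [← Matrix.mul_assoc, hU21, Matrix.zero_mul]]
      simp
    have hterm2 : Matrix.trace ((P Δ)ᵀ * ((U₂ * U₂ᵀ * Δ * V₁) * V₁ᵀ)) = 0 := by
      rw [← Matrix.mul_assoc, Matrix.trace_mul_comm]
      have hz : V₁ᵀ * ((P Δ)ᵀ * (U₂ * U₂ᵀ * Δ * V₁)) = 0 := by
        rw [hPt]
        simp only [Matrix.mul_assoc]
        rw [← Matrix.mul_assoc V₁ᵀ V₂, hV12, Matrix.zero_mul]
      rw [hz, Matrix.trace_zero]
    rw [hterm1, hterm2, Matrix.trace_zero, zero_add]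
  have hMfrob : frobNorm (M Δ) ≤ F := by
    have hsplit : Δ = P Δ + M Δ := by rw [hMdef Δ]; abel
    have hfe : F ^ 2 = frobNorm (P Δ) ^ 2 + frobNorm (M Δ) ^ 2 := by
      rw [hF]
      conv_lhs => rw [hsplit]
      rw [frobNorm_sq_add, hcross]; ring
    have hsq : frobNorm (M Δ) ^ 2 ≤ F ^ 2 := by nlinarith [sq_nonneg (frobNorm (P Δ))]
    have := Real.sqrt_le_sqrt hsq
    rwa [Real.sqrt_sq (frobNorm_nonneg _), Real.sqrt_sq hF0] at this
  have hb_le : b ≤ Real.sqrt (2 * ((K : ℝ) + 1)) * F := by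
    calc b ≤ Real.sqrt ((M Δ).rank) * frobNorm (M Δ) :=
          nuclearNorm_le_sqrt_rank_mul_frobNorm _
      _ ≤ Real.sqrt (2 * ((K : ℝ) + 1)) * F := by
          refine mul_le_mul ?_ hMfrob (frobNorm_nonneg _) (Real.sqrt_nonneg _)
          refine Real.sqrt_le_sqrt ?_
          have := hrankM
          push_cast
          exact_mod_cast Nat.cast_le.mpr this
  -- main error bound
  have hQΔ : κ * F ^ 2 ≤ Q Δ := hQ Δ hmem hcone
  have hQL' : T2 = Q Δ + L Δ := hQL Δ hmem
  have hL' : -(r * d) ≤ L Δ := neg_le_of_abs_le (hL Δ hmem)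
  have p3' : lam * (nuclearNorm Pi0 - nuclearNorm PiHat) ≤ lam * b - lam * a := by
    calc lam * (nuclearNorm Pi0 - nuclearNorm PiHat) ≤ lam * (b - a) := p3
      _ = lam * b - lam * a := by ring
  have hmain : κ * F ^ 2 ≤ 3 * lam * b := by
    linarith [hbasic, hET_le, hQΔ, hQL', hL', p3', p4, p5, p6, p7, p8]
  have hfin : κ * F ^ 2 ≤ 3 * lam * (Real.sqrt (2 * ((K : ℝ) + 1)) * F) := by
    refine le_trans hmain (mul_le_mul_of_nonneg_left hb_le (by positivity))
  rcases eq_or_lt_of_le hF0 with hF0' | hFpos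
  · rw [← hF0']
    positivity
  · have h7 : κ * F ≤ 3 * lam * Real.sqrt (2 * ((K : ℝ) + 1)) := by
      have h8 : (κ * F) * F ≤ (3 * lam * Real.sqrt (2 * ((K : ℝ) + 1))) * F := by
        linarith [hfin]
      exact le_of_mul_le_mul_right h8 hFpos
    rw [le_div_iff₀ hκ]
    linarith [h7]
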